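/- Let G be an n-vertex graph with routing number rt(G) and maximum matching of size ν(G), and suppose there exists a sorting network on the complete graph K_n of depth D (e.g., D = O(log n) by AKS). Then st(G) ≤ D · ⌈n/ν(G)⌉ · (rt(G) + 1); in particular st(G) = O(n log n · rt(G)/ν(G)). -/

import Mathlib

open Finset

variable {V : Type*}

/-- A stage of a sorting network on a graph `G`: a finite set of vertex-disjoint
edges of `G`, each either directed (compare-exchange) or undirected (swap). -/
structure Stage {V : Type*} (G : SimpleGraph V) where
  pairs : Finset (V × V)
  adj : ∀ p ∈ pairs, G.Adj p.1 p.2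
  directed : V × V → Bool
  disj : ∀ p ∈ pairs, ∀ q ∈ pairs, p ≠ q →
    p.1 ≠ q.1 ∧ p.1 ≠ q.2 ∧ p.2 ≠ q.1 ∧ p.2 ≠ q.2

open scoped Classical in
/-- Apply a stage to a configuration of keys `f : V → ℕ`.  For a directed pair
`(u,v)` the smaller key goes to `u` and the larger to `v`; an undirected pair
unconditionally swaps its keys. -/
noncomputable def Stage.apply {G : SimpleGraph V} (s : Stage G) (f : V → ℕ) (v : V) : ℕ :=
  if h1 : ∃ p, p ∈ s.pairs ∧ p.1 = v then
    (if s.directed h1.choose then min (f h1.choose.1) (f h1.choose.2) else f h1.choose.2)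
  else if h2 : ∃ p, p ∈ s.pairs ∧ p.2 = v then
    (if s.directed h2.choose then max (f h2.choose.1) (f h2.choose.2) else f h2.choose.1)
  else f v

noncomputable def runNetwork {G : SimpleGraph V} (L : List (Stage G)) (f : V → ℕ) : V → ℕ :=
  L.foldl (fun g s => s.apply g) f

/-- `L` is a sorting network on `(G, π)`: for every injective assignment of keys,
after running all stages, the key at a vertex of smaller `π`-rank is smaller. -/
def IsSortingNetwork {n : ℕ} (G : SimpleGraph V) (π : V ≃ Fin n) (L : List (Stage G)) : Prop :=
  ∀ f : V → ℕ, Function.Injective f →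
    ∀ u w : V, π u < π w → runNetwork L f u < runNetwork L f w

/-- Minimal depth of a sorting network on `(G, π)`. -/
noncomputable def stP {n : ℕ} (G : SimpleGraph V) (π : V ≃ Fin n) : ℕ :=
  sInf {t | ∃ L : List (Stage G), L.length = t ∧ IsSortingNetwork G π L}

/-- The sorting number of `G` : the minimum over sorted orders `π` of the
minimal depth of a sorting network on `(G, π)`. -/
noncomputable def st [Fintype V] (G : SimpleGraph V) : ℕ :=
  sInf {t | ∃ π : V ≃ Fin (Fintype.card V), ∃ L : List (Stage G),
    L.length = t ∧ IsSortingNetwork G π L}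

/-- A matching step: an involution of the vertices moving pebbles only along edges. -/
def IsMatchingStep (G : SimpleGraph V) (σ : Equiv.Perm V) : Prop :=
  (∀ v, σ (σ v) = v) ∧ ∀ v, σ v ≠ v → G.Adj v (σ v)

/-- Position of a pebble starting at `v` after applying the matching steps in `L`. -/
def finalPos (L : List (Equiv.Perm V)) (v : V) : V :=
  L.foldl (fun p σ => σ p) v

/-- `t` matching steps of `G` suffice to route every pebble from `v` to `σ v`. -/
def RoutesIn (G : SimpleGraph V) (σ : Equiv.Perm V) (t : ℕ) : Prop :=
  ∃ L : List (Equiv.Perm V), L.length = t ∧ (∀ τ ∈ L, IsMatchingStep G τ) ∧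
    ∀ v, finalPos L v = σ v

/-- Routing time of the permutation `σ` on `G`. -/
noncomputable def rtP (G : SimpleGraph V) (σ : Equiv.Perm V) : ℕ :=
  sInf {t | RoutesIn G σ t}

/-- The routing number of `G`. -/
noncomputable def rt [Fintype V] [DecidableEq V] (G : SimpleGraph V) : ℕ :=
  Finset.univ.sup fun σ : Equiv.Perm V => rtP G σ

/-- `M` is a set of edges of `G` forming a matching (pairwise disjoint edges). -/
def IsMatchingSet (G : SimpleGraph V) (M : Finset (Sym2 V)) : Prop :=
  (↑M : Set (Sym2 V)) ⊆ G.edgeSet ∧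
    (↑M : Set (Sym2 V)).Pairwise fun e f => ∀ v, ¬(v ∈ e ∧ v ∈ f)

/-- `ν(G)`: the maximum size of a matching in `G`. -/
noncomputable def nu (G : SimpleGraph V) : ℕ :=
  sSup {k | ∃ M : Finset (Sym2 V), IsMatchingSet G M ∧ M.card = k}

/- ======================= auxiliary development ======================= -/

section AuxSpec

theorem myApply_fst {G : SimpleGraph V} (s : Stage G) (f : V → ℕ) {p : V × V}
    (hp : p ∈ s.pairs) :
    s.apply f p.1 = if s.directed p then min (f p.1) (f p.2) else f p.2 := by
  have hex : ∃ q, q ∈ s.pairs ∧ q.1 = p.1 := ⟨p, hp, rfl⟩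
  have hcp : hex.choose = p := by
    by_contra hne
    exact (s.disj _ hex.choose_spec.1 p hp hne).1 hex.choose_spec.2
  simp only [Stage.apply]
  simp only [dif_pos hex]
  rw [hcp]

theorem myApply_snd {G : SimpleGraph V} (s : Stage G) (f : V → ℕ) {p : V × V}
    (hp : p ∈ s.pairs) :
    s.apply f p.2 = if s.directed p then max (f p.1) (f p.2) else f p.1 := by
  have hne12 : p.1 ≠ p.2 := (s.adj p hp).ne
  have h1 : ¬ ∃ q, q ∈ s.pairs ∧ q.1 = p.2 := by
    rintro ⟨q, hq, hq1⟩
    rcases eq_or_ne q p with rfl | hne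
    · exact hne12 hq1
    · exact (s.disj q hq p hp hne).2.1 hq1
  have hex : ∃ q, q ∈ s.pairs ∧ q.2 = p.2 := ⟨p, hp, rfl⟩
  have hcp : hex.choose = p := by
    by_contra hne
    exact (s.disj _ hex.choose_spec.1 p hp hne).2.2.2 hex.choose_spec.2
  simp only [Stage.apply]
  simp only [dif_neg h1, dif_pos hex]
  rw [hcp]

theorem myApply_not_mem {G : SimpleGraph V} (s : Stage G) (f : V → ℕ) {v : V}
    (hv : ∀ p ∈ s.pairs, v ≠ p.1 ∧ v ≠ p.2) :
    s.apply f v = f v := by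
  have h1 : ¬ ∃ q, q ∈ s.pairs ∧ q.1 = v := by
    rintro ⟨q, hq, h⟩; exact (hv q hq).1 h.symm
  have h2 : ¬ ∃ q, q ∈ s.pairs ∧ q.2 = v := by
    rintro ⟨q, hq, h⟩; exact (hv q hq).2 h.symm
  simp only [Stage.apply]
  simp only [dif_neg h1, dif_neg h2]

theorem myRunNetwork_nil {G : SimpleGraph V} (f : V → ℕ) : runNetwork ([] : List (Stage G)) f = f := rfl

theorem myRunNetwork_cons {G : SimpleGraph V} (s : Stage G) (L : List (Stage G)) (f : V → ℕ) :
    runNetwork (s :: L) f = runNetwork L (s.apply f) := rfl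

theorem myRunNetwork_append {G : SimpleGraph V} (L₁ L₂ : List (Stage G)) (f : V → ℕ) :
    runNetwork (L₁ ++ L₂) f = runNetwork L₂ (runNetwork L₁ f) := by
  simp [runNetwork, List.foldl_append]

end AuxSpec

section AuxSwap

open Equiv

/-- The stage of unconditional swaps realizing a matching step. -/
noncomputable def swapStage [Fintype V] [DecidableEq V] (G : SimpleGraph V)
    (τ : Equiv.Perm V) (hτ : IsMatchingStep G τ) : Stage G where
  pairs := (Finset.univ.filter
      (fun v => (Fintype.equivFin V v : ℕ) < Fintype.equivFin V (τ v))).image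
    (fun v => (v, τ v))
  adj := by
    intro p hp
    simp only [Finset.mem_image, Finset.mem_filter, Finset.mem_univ, true_and] at hp
    obtain ⟨v, hv, rfl⟩ := hp
    exact hτ.2 v (fun h => absurd (congrArg (fun w => (Fintype.equivFin V w : ℕ)) h.symm)
      (Nat.ne_of_lt hv))
  directed := fun _ => false
  disj := by
    intro p hp q hq hne
    simp only [Finset.mem_image, Finset.mem_filter, Finset.mem_univ, true_and] at hp hq
    obtain ⟨v, hv, rfl⟩ := hp
    obtain ⟨w, hw, rfl⟩ := hq
    dsimp only
    have hvw : v ≠ w := fun h => hne (by rw [h])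
    have hvtw : v ≠ τ w := by
      intro h
      have h2 : τ v = w := by rw [h, hτ.1]
      rw [h2] at hv
      rw [← h] at hw
      exact absurd (hv.trans hw) (lt_irrefl _)
    refine ⟨hvw, hvtw, ?_, fun h => hvw (τ.injective h)⟩
    intro h
    exact hvtw (by rw [← h, hτ.1])

theorem swapStage_apply [Fintype V] [DecidableEq V] (G : SimpleGraph V)
    (τ : Equiv.Perm V) (hτ : IsMatchingStep G τ) (f : V → ℕ) (v : V) :
    (swapStage G τ hτ).apply f v = f (τ v) := by
  set e := Fintype.equivFin V with he
  rcases lt_trichotomy ((e v : ℕ)) (e (τ v)) with hlt | heq | hgt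
  · have hp : (v, τ v) ∈ (swapStage G τ hτ).pairs := by
      simp only [swapStage, Finset.mem_image, Finset.mem_filter, Finset.mem_univ, true_and]
      exact ⟨v, hlt, rfl⟩
    have := myApply_fst (swapStage G τ hτ) f hp
    simpa [swapStage] using this
  · have hfix : τ v = v := (e.injective (Fin.ext heq.symm))
    have : (swapStage G τ hτ).apply f v = f v := by
      apply myApply_not_mem
      intro p hp
      simp only [swapStage, Finset.mem_image, Finset.mem_filter, Finset.mem_univ,
        true_and] at hp
      obtain ⟨w, hw, rfl⟩ := hp
      constructor
      · rintro rfl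
        rw [hfix] at hw
        exact absurd hw (lt_irrefl _)
      · rintro rfl
        have h3 : τ (τ w) = τ w := hfix
        rw [hτ.1] at h3
        rw [← h3] at hw
        exact absurd hw (lt_irrefl _)
    rw [this, hfix]
  · have hp : (τ v, v) ∈ (swapStage G τ hτ).pairs := by
      simp only [swapStage, Finset.mem_image, Finset.mem_filter, Finset.mem_univ, true_and]
      refine ⟨τ v, ?_, by rw [hτ.1]⟩
      rw [hτ.1]; exact hgt
    have := myApply_snd (swapStage G τ hτ) f hp
    simpa [swapStage] using this

/-- Realize a list of matching steps as a list of swap stages of the same length. -/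
theorem swaps_network [Fintype V] [DecidableEq V] (G : SimpleGraph V) :
    ∀ L : List (Equiv.Perm V), (∀ τ ∈ L, IsMatchingStep G τ) →
      ∃ L' : List (Stage G), L'.length = L.length ∧
        ∀ (f : V → ℕ) (v : V), runNetwork L' f (finalPos L v) = f v := by
  intro L
  induction L with
  | nil => exact fun _ => ⟨[], rfl, fun f v => rfl⟩
  | cons τ L ih =>
    intro hL
    obtain ⟨L', hlen, hrun⟩ := ih (fun σ hσ => hL σ (List.mem_cons_of_mem _ hσ))
    have hτ : IsMatchingStep G τ := hL τ (List.mem_cons_self)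
    refine ⟨swapStage G τ hτ :: L', by simp [hlen], fun f v => ?_⟩
    have h1 : finalPos (τ :: L) v = finalPos L (τ v) := rfl
    rw [h1, myRunNetwork_cons, hrun]
    rw [swapStage_apply, hτ.1]

theorem route_network [Fintype V] [DecidableEq V] (G : SimpleGraph V)
    {σ : Equiv.Perm V} {t : ℕ} (h : RoutesIn G σ t) :
    ∃ L' : List (Stage G), L'.length = t ∧
      ∀ f : V → ℕ, runNetwork L' f = f ∘ ⇑σ.symm := by
  obtain ⟨L, hlen, hmatch, hfin⟩ := h
  obtain ⟨L', hlen', hrun⟩ := swaps_network G L hmatch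
  refine ⟨L', by rw [hlen', hlen], fun f => funext fun w => ?_⟩
  have := hrun f (σ.symm w)
  rwa [hfin, Equiv.apply_symm_apply] at this

end AuxSwap

section AuxRoute

theorem myFinalPos_append (L₁ L₂ : List (Equiv.Perm V)) (v : V) :
    finalPos (L₁ ++ L₂) v = finalPos L₂ (finalPos L₁ v) := by
  simp [finalPos, List.foldl_append]

theorem myRoutesIn_one {G : SimpleGraph V} : RoutesIn G 1 0 :=
  ⟨[], rfl, by simp, fun v => rfl⟩

theorem myIsMatchingStep_one {G : SimpleGraph V} : IsMatchingStep G 1 :=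
  ⟨fun v => rfl, fun v h => absurd rfl h⟩

theorem myRoutesIn_mul {G : SimpleGraph V} {σ τ : Equiv.Perm V} {s t : ℕ}
    (hσ : RoutesIn G σ s) (hτ : RoutesIn G τ t) : RoutesIn G (τ * σ) (s + t) := by
  obtain ⟨L₁, hl₁, hm₁, hf₁⟩ := hσ
  obtain ⟨L₂, hl₂, hm₂, hf₂⟩ := hτ
  refine ⟨L₁ ++ L₂, by simp [hl₁, hl₂], ?_, fun v => ?_⟩
  · intro x hx
    rcases List.mem_append.1 hx with h | h
    · exact hm₁ x h
    · exact hm₂ x h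
  · rw [myFinalPos_append, hf₁ v, hf₂ (σ v)]; rfl

theorem myRoutesIn_swap_adj [DecidableEq V] {G : SimpleGraph V} {u w : V} (h : G.Adj u w) :
    RoutesIn G (Equiv.swap u w) 1 := by
  classical
  refine ⟨[Equiv.swap u w], rfl, ?_, fun v => rfl⟩
  intro τ hτ
  simp only [List.mem_singleton] at hτ
  subst hτ
  refine ⟨fun v => Equiv.swap_apply_self _ _ _, fun v hv => ?_⟩
  rcases Equiv.swap_apply_ne_self_iff.1 hv with ⟨-, rfl | rfl⟩
  · rw [Equiv.swap_apply_left]; exact h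
  · rw [Equiv.swap_apply_right]; exact h.symm

theorem myRoutesIn_swap_reachable [DecidableEq V] {G : SimpleGraph V} {u w : V} (h : G.Reachable u w) :
    ∃ t, RoutesIn G (Equiv.swap u w) t := by
  classical
  obtain ⟨p⟩ := h
  induction p with
  | nil =>
    refine ⟨0, ?_⟩
    rw [Equiv.swap_self]
    exact myRoutesIn_one
  | @cons u x w h p ih =>
    rcases eq_or_ne w u with rfl | hwu
    · refine ⟨0, ?_⟩
      rw [Equiv.swap_self]
      exact myRoutesIn_one
    rcases eq_or_ne w x with rfl | hwx
    · exact ⟨1, myRoutesIn_swap_adj h⟩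
    obtain ⟨t, ht⟩ := ih
    have hA : RoutesIn G (Equiv.swap x u) 1 := by
      rw [Equiv.swap_comm]; exact myRoutesIn_swap_adj h
    have hB : RoutesIn G (Equiv.swap w x) t := by
      rw [Equiv.swap_comm]; exact ht
    have hcomb := myRoutesIn_mul (myRoutesIn_mul hA hB) hA
    have hid : Equiv.swap x u * (Equiv.swap w x * Equiv.swap x u) = Equiv.swap u w := by
      rw [← mul_assoc]
      exact Equiv.swap_mul_swap_mul_swap hwx hwu
    rw [hid] at hcomb
    exact ⟨1 + t + 1, hcomb⟩

theorem myRoutes_all [Fintype V] [DecidableEq V] {G : SimpleGraph V} (hG : G.Connected)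
    (σ : Equiv.Perm V) : ∃ t, RoutesIn G σ t := by
  classical
  refine Equiv.Perm.swap_induction_on σ ⟨0, myRoutesIn_one⟩ ?_
  intro π x y hxy ih
  obtain ⟨t, ht⟩ := ih
  obtain ⟨t', ht'⟩ := myRoutesIn_swap_reachable (hG.preconnected x y)
  exact ⟨t + t', myRoutesIn_mul ht ht'⟩

theorem myFinalPos_replicate_one (k : ℕ) (v : V) :
    finalPos (List.replicate k (1 : Equiv.Perm V)) v = v := by
  induction k generalizing v with
  | zero => rfl
  | succ k ih => exact ih v

theorem myRoutesIn_mono {G : SimpleGraph V} {σ : Equiv.Perm V} {s t : ℕ}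
    (hst : s ≤ t) (h : RoutesIn G σ s) : RoutesIn G σ t := by
  obtain ⟨L, hl, hm, hf⟩ := h
  refine ⟨L ++ List.replicate (t - s) 1, by simp [hl, Nat.add_sub_cancel' hst], ?_, fun v => ?_⟩
  · intro τ hτ
    rcases List.mem_append.1 hτ with h | h
    · exact hm τ h
    · rw [List.eq_of_mem_replicate h]; exact myIsMatchingStep_one
  · rw [myFinalPos_append, hf v, myFinalPos_replicate_one]

theorem myRoutesIn_rt [Fintype V] [DecidableEq V] {G : SimpleGraph V} (hG : G.Connected)
    (σ : Equiv.Perm V) : RoutesIn G σ (rt G) := by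
  have hne : {t | RoutesIn G σ t}.Nonempty := myRoutes_all hG σ
  have h1 : RoutesIn G σ (rtP G σ) := Nat.sInf_mem hne
  exact myRoutesIn_mono (Finset.le_sup (Finset.mem_univ σ)) h1

end AuxRoute

section AuxPerm

theorem myPerm_extend {α : Type*} [Fintype V] {U W : α → V}
    (hU : Function.Injective U) (hW : Function.Injective W) :
    ∃ σ : Equiv.Perm V, ∀ x, σ (U x) = W x := by
  classical
  let e : {v // v ∈ Set.range U} ≃ {v // v ∈ Set.range W} :=
    (Equiv.ofInjective U hU).symm.trans (Equiv.ofInjective W hW)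
  refine ⟨e.extendSubtype, fun x => ?_⟩
  rw [Equiv.extendSubtype_apply_of_mem e (U x) (Set.mem_range_self x)]
  show ((Equiv.ofInjective W hW) ((Equiv.ofInjective U hU).symm ⟨U x, Set.mem_range_self x⟩) : V) = W x
  rw [show (⟨U x, Set.mem_range_self x⟩ : {v // v ∈ Set.range U}) = Equiv.ofInjective U hU x from rfl]
  rw [Equiv.symm_apply_apply]
  rfl

end AuxPerm

section AuxSplit

/-- The sub-stage of `s` with pairs restricted to `B ⊆ s.pairs`. -/
def stageOn {G : SimpleGraph V} (s : Stage G) (B : Finset (V × V)) (hB : B ⊆ s.pairs) :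
    Stage G where
  pairs := B
  adj := fun p hp => s.adj p (hB hp)
  directed := s.directed
  disj := fun p hp q hq => s.disj p (hB hp) q (hB hq)

theorem stage_split [DecidableEq V] {G : SimpleGraph V} (s : Stage G) (A : Finset (V × V))
    (hA : A ⊆ s.pairs) (f : V → ℕ) :
    s.apply f = (stageOn s (s.pairs \ A) Finset.sdiff_subset).apply ((stageOn s A hA).apply f) := by
  classical
  funext v
  have huniq : ∀ {p q : V × V}, p ∈ s.pairs → q ∈ s.pairs →
      ∀ w, (w = p.1 ∨ w = p.2) → (w = q.1 ∨ w = q.2) → p = q := by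
    intro p q hp hq w hwp hwq
    by_contra hne
    obtain ⟨h1, h2, h3, h4⟩ := s.disj p hp q hq hne
    rcases hwp with rfl | rfl <;> rcases hwq with h | h
    · exact h1 h
    · exact h2 h
    · exact h3 h
    · exact h4 h
  by_cases hv : ∃ p, p ∈ s.pairs ∧ (v = p.1 ∨ v = p.2)
  · obtain ⟨p, hp, hvp⟩ := hv
    by_cases hpA : p ∈ A
    · -- p handled by the A-substage; v untouched by the B-substage
      have hnotB : ∀ q ∈ (stageOn s (s.pairs \ A) Finset.sdiff_subset).pairs,
          v ≠ q.1 ∧ v ≠ q.2 := by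
        intro q hq
        have hq' : q ∈ s.pairs \ A := hq
        rw [Finset.mem_sdiff] at hq'
        constructor <;> intro h
        · exact hq'.2 (huniq hq'.1 hp v (Or.inl h) hvp ▸ hpA)
        · exact hq'.2 (huniq hq'.1 hp v (Or.inr h) hvp ▸ hpA)
      rw [myApply_not_mem _ _ hnotB]
      rcases hvp with rfl | rfl
      · rw [myApply_fst s f hp, myApply_fst (stageOn s A hA) f (by exact hpA)]
        rfl
      · rw [myApply_snd s f hp, myApply_snd (stageOn s A hA) f (by exact hpA)]
        rfl
    · -- p handled by the B-substage; its endpoints untouched by the A-substage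
      have hpB : p ∈ (stageOn s (s.pairs \ A) Finset.sdiff_subset).pairs :=
        Finset.mem_sdiff.2 ⟨hp, hpA⟩
      have hnotA : ∀ w, (w = p.1 ∨ w = p.2) → (stageOn s A hA).apply f w = f w := by
        intro w hw
        apply myApply_not_mem
        intro q hq
        have hq' : q ∈ s.pairs := hA hq
        constructor <;> intro h
        · exact hpA ((huniq hq' hp w (Or.inl h) hw) ▸ hq)
        · exact hpA ((huniq hq' hp w (Or.inr h) hw) ▸ hq)
      rcases hvp with rfl | rfl
      · rw [myApply_fst s f hp, myApply_fst (stageOn s (s.pairs \ A) Finset.sdiff_subset) _ hpB,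
          hnotA p.1 (Or.inl rfl), hnotA p.2 (Or.inr rfl)]
        rfl
      · rw [myApply_snd s f hp, myApply_snd (stageOn s (s.pairs \ A) Finset.sdiff_subset) _ hpB,
          hnotA p.1 (Or.inl rfl), hnotA p.2 (Or.inr rfl)]
        rfl
  · -- v untouched everywhere
    push_neg at hv
    rw [myApply_not_mem s f hv]
    rw [myApply_not_mem (stageOn s (s.pairs \ A) Finset.sdiff_subset) _
      (fun p hp => hv p (Finset.sdiff_subset hp))]
    rw [myApply_not_mem (stageOn s A hA) f (fun p hp => hv p (hA hp))]

theorem stage_decomp [DecidableEq V] {G : SimpleGraph V} (ν : ℕ) :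
    ∀ (k : ℕ) (s : Stage G), s.pairs.card ≤ k * ν →
      ∃ ss : List (Stage G), ss.length = k ∧ (∀ t ∈ ss, t.pairs.card ≤ ν) ∧
        ∀ f, runNetwork ss f = s.apply f := by
  classical
  intro k
  induction k with
  | zero =>
    intro s hs
    refine ⟨[], rfl, by simp, fun f => ?_⟩
    have hemp : s.pairs = ∅ := by
      simpa only [Nat.zero_mul, Nat.le_zero, Finset.card_eq_zero] using hs
    rw [myRunNetwork_nil]
    funext v
    refine (myApply_not_mem s f ?_).symm
    intro p hp
    rw [hemp] at hp
    exact absurd hp (Finset.notMem_empty p)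
  | succ k ih =>
    intro s hs
    obtain ⟨A, hAsub, hAcard⟩ :=
      Finset.exists_subset_card_eq (min_le_right ν s.pairs.card)
    have hBcard : (s.pairs \ A).card ≤ k * ν := by
      rw [Finset.card_sdiff_of_subset hAsub, hAcard]
      rcases le_total s.pairs.card ν with h | h
      · simp [min_eq_right h]
      · rw [min_eq_left h]
        have : s.pairs.card ≤ k * ν + ν := by
          rw [← Nat.succ_mul]; exact hs
        exact Nat.sub_le_iff_le_add.2 this
    obtain ⟨ss, hlen, hsmall, happ⟩ := ih (stageOn s (s.pairs \ A) Finset.sdiff_subset) hBcard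
    refine ⟨stageOn s A hAsub :: ss, by simp [hlen], ?_, fun f => ?_⟩
    · intro t ht
      rcases List.mem_cons.1 ht with rfl | h
      · show A.card ≤ ν
        rw [hAcard]; exact min_le_left _ _
      · exact hsmall t h
    · rw [myRunNetwork_cons, happ]
      exact (stage_split s A hAsub f).symm

end AuxSplit

section AuxGroup

theorem group_sim [Fintype V] [DecidableEq V] {G : SimpleGraph V} (hG : G.Connected)
    {ν : ℕ} (a b : Fin ν → V) (hab : ∀ i, G.Adj (a i) (b i))
    (habinj : Function.Injective (Sum.elim a b : Fin ν ⊕ Fin ν → V))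
    (s : Stage (⊤ : SimpleGraph V)) (hcard : s.pairs.card ≤ ν) (π₀ : Equiv.Perm V) :
    ∃ (L : List (Stage G)) (π₁ : Equiv.Perm V), L.length = rt G + 1 ∧
      ∀ f : V → ℕ, runNetwork L (f ∘ ⇑π₀.symm) = s.apply f ∘ ⇑π₁.symm := by
  classical
  have hAA : ∀ {i j}, a i = a j → i = j := fun {i j} h =>
    Sum.inl.inj (habinj (a₁ := Sum.inl i) (a₂ := Sum.inl j) h)
  have hBB : ∀ {i j}, b i = b j → i = j := fun {i j} h =>
    Sum.inr.inj (habinj (a₁ := Sum.inr i) (a₂ := Sum.inr j) h)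
  have hAB : ∀ i j, a i ≠ b j := fun i j h => by
    simpa using habinj (a₁ := Sum.inl i) (a₂ := Sum.inr j) h
  -- an injection of the pairs into `Fin ν`
  have hcard' : Fintype.card {p // p ∈ s.pairs} ≤ ν :=
    le_trans (le_of_eq (Fintype.card_coe s.pairs)) hcard
  let ι : {p // p ∈ s.pairs} → Fin ν := fun p =>
    Fin.castLE hcard' (Fintype.equivFin {p // p ∈ s.pairs} p)
  have hι : Function.Injective ι := fun p q h =>
    (Fintype.equivFin {p // p ∈ s.pairs}).injective (Fin.castLE_injective _ h)
  have hne12 : ∀ (p : {p // p ∈ s.pairs}), p.1.1 ≠ p.1.2 := fun p => (s.adj p.1 p.2).ne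
  have huniq : ∀ (p q : {x // x ∈ s.pairs}) (w : V),
      (w = p.1.1 ∨ w = p.1.2) → (w = q.1.1 ∨ w = q.1.2) → p = q := by
    intro p q w hp hq
    by_contra hne
    have hne' : p.1 ≠ q.1 := fun h => hne (Subtype.ext h)
    obtain ⟨h1, h2, h3, h4⟩ := s.disj p.1 p.2 q.1 q.2 hne'
    rcases hp with rfl | rfl <;> rcases hq with h | h
    exacts [h1 h, h2 h, h3 h, h4 h]
  set U : {p // p ∈ s.pairs} ⊕ {p // p ∈ s.pairs} → V :=
    Sum.elim (fun p => π₀ p.1.1) (fun p => π₀ p.1.2) with hUdef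
  set W : {p // p ∈ s.pairs} ⊕ {p // p ∈ s.pairs} → V :=
    Sum.elim (fun p => a (ι p)) (fun p => b (ι p)) with hWdef
  have hU : Function.Injective U := by
    rintro (p | p) (q | q) h <;>
      simp only [hUdef, Sum.elim_inl, Sum.elim_inr] at h <;>
      replace h := π₀.injective h
    · rw [huniq p q p.1.1 (Or.inl rfl) (Or.inl h)]
    · have hpq : p = q := huniq p q p.1.1 (Or.inl rfl) (Or.inr h)
      rw [hpq] at h; exact absurd h (hne12 q)
    · have hpq : p = q := huniq p q p.1.2 (Or.inr rfl) (Or.inl h)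
      rw [hpq] at h; exact absurd h.symm (hne12 q)
    · rw [huniq p q p.1.2 (Or.inr rfl) (Or.inr h)]
  have hW : Function.Injective W := by
    rintro (p | p) (q | q) h <;> simp only [hWdef, Sum.elim_inl, Sum.elim_inr] at h
    · rw [hι (hAA h)]
    · exact absurd h (hAB _ _)
    · exact absurd h.symm (hAB _ _)
    · rw [hι (hBB h)]
  obtain ⟨σ, hσ⟩ := myPerm_extend hU hW
  set π₁ : Equiv.Perm V := π₀.trans σ with hπ₁
  have hπa : ∀ (p : {x // x ∈ s.pairs}), π₁ p.1.1 = a (ι p) := fun p => hσ (Sum.inl p)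
  have hπb : ∀ (p : {x // x ∈ s.pairs}), π₁ p.1.2 = b (ι p) := fun p => hσ (Sum.inr p)
  obtain ⟨Lr, hLrlen, hLrrun⟩ := route_network G (myRoutesIn_rt hG σ)
  set C : Stage G := {
    pairs := s.pairs.attach.image (fun p => (a (ι p), b (ι p)))
    adj := by
      intro p hp
      simp only [Finset.mem_image, Finset.mem_attach, true_and] at hp
      obtain ⟨q, hq⟩ := hp
      rw [← hq]; exact hab _
    directed := fun q => s.directed (π₁.symm q.1, π₁.symm q.2)
    disj := by
      intro p hp q hq hne
      simp only [Finset.mem_image, Finset.mem_attach, true_and] at hp hq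
      obtain ⟨p', rfl⟩ := hp
      obtain ⟨q', rfl⟩ := hq
      have hij : ι p' ≠ ι q' := fun h => hne (by rw [h])
      exact ⟨fun h => hij (hAA h), hAB _ _, fun h => hAB _ _ h.symm, fun h => hij (hBB h)⟩
  } with hC
  refine ⟨Lr ++ [C], π₁, by simp [hLrlen], fun f => ?_⟩
  rw [myRunNetwork_append, hLrrun]
  have hcomp : (f ∘ ⇑π₀.symm) ∘ ⇑σ.symm = f ∘ ⇑π₁.symm := by
    funext w
    simp [hπ₁, Equiv.symm_trans_apply]
  rw [show runNetwork [C] ((f ∘ ⇑π₀.symm) ∘ ⇑σ.symm) =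
    C.apply ((f ∘ ⇑π₀.symm) ∘ ⇑σ.symm) from rfl, hcomp]
  funext w
  show C.apply (f ∘ ⇑π₁.symm) w = s.apply f (π₁.symm w)
  by_cases hx : ∃ p, p ∈ s.pairs ∧ (π₁.symm w = p.1 ∨ π₁.symm w = p.2)
  · obtain ⟨p, hp, hxp⟩ := hx
    set p' : {x // x ∈ s.pairs} := ⟨p, hp⟩ with hp'
    have hmem : (a (ι p'), b (ι p')) ∈ C.pairs := by
      rw [hC]; exact Finset.mem_image_of_mem _ (Finset.mem_attach _ p')
    have hda : π₁.symm (a (ι p')) = p.1 := by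
      rw [← hπa p']; exact π₁.symm_apply_apply _
    have hdb : π₁.symm (b (ι p')) = p.2 := by
      rw [← hπb p']; exact π₁.symm_apply_apply _
    have hdir : C.directed (a (ι p'), b (ι p')) = s.directed p := by
      show s.directed (π₁.symm (a (ι p')), π₁.symm (b (ι p'))) = s.directed p
      rw [hda, hdb]
    rcases hxp with hxp | hxp
    · have hw : w = a (ι p') := by
        rw [← hπa p', hp', ← hxp, Equiv.apply_symm_apply]
      rw [hw]
      have h1 := myApply_fst C (f ∘ ⇑π₁.symm) hmem
      dsimp only at h1
      rw [h1, hdir]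
      simp only [Function.comp_apply]
      rw [hda, hdb]
      exact (myApply_fst s f hp).symm
    · have hw : w = b (ι p') := by
        rw [← hπb p', hp', ← hxp, Equiv.apply_symm_apply]
      rw [hw]
      have h1 := myApply_snd C (f ∘ ⇑π₁.symm) hmem
      dsimp only at h1
      rw [h1, hdir]
      simp only [Function.comp_apply]
      rw [hda, hdb]
      exact (myApply_snd s f hp).symm
  · push_neg at hx
    have h1 : C.apply (f ∘ ⇑π₁.symm) w = (f ∘ ⇑π₁.symm) w := by
      apply myApply_not_mem
      intro q hq
      rw [hC] at hq
      simp only [Finset.mem_image, Finset.mem_attach, true_and] at hq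
      obtain ⟨q', rfl⟩ := hq
      constructor
      · intro h
        have : π₁.symm w = q'.1.1 := by
          rw [h, ← hπa q', Equiv.symm_apply_apply]
        exact (hx q'.1 q'.2).1 this
      · intro h
        have : π₁.symm w = q'.1.2 := by
          rw [h, ← hπb q', Equiv.symm_apply_apply]
        exact (hx q'.1 q'.2).2 this
    rw [h1]
    rw [myApply_not_mem s f (fun p hp => hx p hp)]
    rfl

theorem list_sim {G : SimpleGraph V} {c : ℕ} (P : Stage (⊤ : SimpleGraph V) → Prop)
    (hstep : ∀ s, P s → ∀ π₀ : Equiv.Perm V, ∃ (L : List (Stage G)) (π₁ : Equiv.Perm V),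
      L.length = c ∧ ∀ f, runNetwork L (f ∘ ⇑π₀.symm) = s.apply f ∘ ⇑π₁.symm) :
    ∀ (LS : List (Stage (⊤ : SimpleGraph V))), (∀ s ∈ LS, P s) → ∀ π₀ : Equiv.Perm V,
      ∃ (L' : List (Stage G)) (π₁ : Equiv.Perm V), L'.length = LS.length * c ∧
        ∀ f, runNetwork L' (f ∘ ⇑π₀.symm) = runNetwork LS f ∘ ⇑π₁.symm := by
  intro LS
  induction LS with
  | nil => exact fun _ π₀ => ⟨[], π₀, by simp, fun f => rfl⟩
  | cons s LS ih =>
    intro hP π₀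
    obtain ⟨L₁, πa, hl₁, hr₁⟩ := hstep s (hP s (List.mem_cons_self)) π₀
    obtain ⟨L₂, π₁, hl₂, hr₂⟩ := ih (fun t ht => hP t (List.mem_cons_of_mem _ ht)) πa
    refine ⟨L₁ ++ L₂, π₁, ?_, fun f => ?_⟩
    · rw [List.length_append, hl₁, hl₂, List.length_cons, Nat.succ_mul, Nat.add_comm]
    · rw [myRunNetwork_append, hr₁ f, hr₂ (s.apply f)]
      rfl

end AuxGroup

/-- if there is a sorting network of depth `D` on the complete
graph on the vertices of `G`, then `st(G) ≤ D ⌈n/ν(G)⌉ (rt(G)+1)`. -/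
theorem stmt11 {V : Type*} [Fintype V] [DecidableEq V] (G : SimpleGraph V)
    (hG : G.Connected) (D : ℕ)
    (hD : ∃ (π : V ≃ Fin (Fintype.card V)) (L : List (Stage (⊤ : SimpleGraph V))),
      L.length = D ∧ IsSortingNetwork (⊤ : SimpleGraph V) π L) :
    st G ≤ D * ((Fintype.card V + nu G - 1) / nu G) * (rt G + 1) := by
  classical
  by_cases hn : Fintype.card V ≤ 1
  · have h0 : (0 : ℕ) ∈ {t | ∃ π : V ≃ Fin (Fintype.card V), ∃ L : List (Stage G),
        L.length = t ∧ IsSortingNetwork G π L} := by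
      refine ⟨Fintype.equivFin V, [], rfl, fun f hf u w hlt => ?_⟩
      have hsub : Subsingleton V := Fintype.card_le_one_iff_subsingleton.1 hn
      rw [Subsingleton.elim u w] at hlt
      exact absurd hlt (lt_irrefl _)
    exact le_trans (Nat.sInf_le h0) (Nat.zero_le _)
  push_neg at hn
  -- a maximum matching
  set S : Set ℕ := {k | ∃ M : Finset (Sym2 V), IsMatchingSet G M ∧ M.card = k} with hS
  have h0S : 0 ∈ S := ⟨∅, ⟨by simp, by simp⟩, rfl⟩
  have hbdd : BddAbove S := by
    refine ⟨Fintype.card (Sym2 V), ?_⟩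
    rintro k ⟨M, -, rfl⟩
    exact Finset.card_le_univ M
  have hnuS : nu G ∈ S := Nat.sSup_mem ⟨0, h0S⟩ hbdd
  set ν := nu G with hν
  obtain ⟨M, hM, hMcard⟩ := hnuS
  have hν1 : 1 ≤ ν := by
    obtain ⟨u, w, huw⟩ := Fintype.exists_pair_of_one_lt_card hn
    obtain ⟨p⟩ := hG.preconnected u w
    have hadj : ∃ x y, G.Adj x y := by
      cases p with
      | nil => exact absurd rfl huw
      | cons h _ => exact ⟨_, _, h⟩
    obtain ⟨x, y, hxy⟩ := hadj
    have h1S : 1 ∈ S := by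
      refine ⟨{s(x, y)}, ⟨?_, ?_⟩, Finset.card_singleton _⟩
      · intro e he
        simp only [Finset.coe_singleton, Set.mem_singleton_iff] at he
        rw [he]
        exact (SimpleGraph.mem_edgeSet G).2 hxy
      · simp [Set.pairwise_singleton]
    exact le_csSup hbdd h1S
  -- endpoints of the matching edges
  let eM : {e // e ∈ M} ≃ Fin ν := Finset.equivFinOfCardEq hMcard
  have hrep : ∀ i : Fin ν, ∃ p : V × V, Sym2.mk p.1 p.2 = (eM.symm i).1 ∧ G.Adj p.1 p.2 := by
    intro i
    obtain ⟨p, hp⟩ := Quot.exists_rep ((eM.symm i).1)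
    refine ⟨p, hp, ?_⟩
    have hmem : (eM.symm i).1 ∈ G.edgeSet := hM.1 (Finset.mem_coe.2 (eM.symm i).2)
    rw [← hp] at hmem
    exact (SimpleGraph.mem_edgeSet G).1 hmem
  choose ab hab1 hab2 using hrep
  set a : Fin ν → V := fun i => (ab i).1 with ha
  set b : Fin ν → V := fun i => (ab i).2 with hb
  have habadj : ∀ i, G.Adj (a i) (b i) := hab2
  have hmemedge : ∀ i, a i ∈ (eM.symm i).1 ∧ b i ∈ (eM.symm i).1 := by
    intro i
    rw [← hab1 i]
    exact ⟨Sym2.mem_mk_left _ _, Sym2.mem_mk_right _ _⟩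
  have hdisj : ∀ i j : Fin ν, i ≠ j → ∀ v : V,
      ¬(v ∈ (eM.symm i).1 ∧ v ∈ (eM.symm j).1) := by
    intro i j hij v
    exact hM.2 (Finset.mem_coe.2 (eM.symm i).2) (Finset.mem_coe.2 (eM.symm j).2)
      (fun h => hij (eM.symm.injective (Subtype.ext h))) v
  have habinj : Function.Injective (Sum.elim a b : Fin ν ⊕ Fin ν → V) := by
    rintro (i | i) (j | j) h <;> simp only [Sum.elim_inl, Sum.elim_inr] at h
    · have hij : i = j := by
        by_contra hij
        refine hdisj i j hij (a i) ⟨(hmemedge i).1, ?_⟩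
        rw [h]; exact (hmemedge j).1
      rw [hij]
    · exfalso
      rcases eq_or_ne i j with rfl | hij
      · exact (habadj i).ne h
      · refine hdisj i j hij (a i) ⟨(hmemedge i).1, ?_⟩
        rw [h]; exact (hmemedge j).2
    · exfalso
      rcases eq_or_ne i j with rfl | hij
      · exact (habadj i).ne h.symm
      · refine hdisj i j hij (b i) ⟨(hmemedge i).2, ?_⟩
        rw [h]; exact (hmemedge j).1
    · have hij : i = j := by
        by_contra hij
        refine hdisj i j hij (b i) ⟨(hmemedge i).2, ?_⟩
        rw [h]; exact (hmemedge j).2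
      rw [hij]
  -- arithmetic
  set q := (Fintype.card V + ν - 1) / ν with hq
  have hqν : Fintype.card V ≤ q * ν := by
    rw [Nat.mul_comm]
    have h1 := Nat.div_add_mod (Fintype.card V + ν - 1) ν
    have h2 : (Fintype.card V + ν - 1) % ν < ν := Nat.mod_lt _ hν1
    rw [← hq] at h1
    generalize hgen : ν * q = t at h1 ⊢
    omega
  -- per-stage simulation
  have hstage : ∀ s : Stage (⊤ : SimpleGraph V), True → ∀ π₀ : Equiv.Perm V,
      ∃ (L : List (Stage G)) (π₁ : Equiv.Perm V), L.length = q * (rt G + 1) ∧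
        ∀ f, runNetwork L (f ∘ ⇑π₀.symm) = s.apply f ∘ ⇑π₁.symm := by
    intro s _ π₀
    have hc : s.pairs.card ≤ q * ν := by
      refine le_trans ?_ hqν
      have hcu : s.pairs.card ≤ (Finset.univ : Finset V).card := by
        apply Finset.card_le_card_of_injOn (fun p => p.1)
        · exact fun p _ => Finset.mem_univ _
        · intro p hp p' hp' hh
          by_contra hne
          exact (s.disj p (Finset.mem_coe.1 hp) p' (Finset.mem_coe.1 hp') hne).1 hh
      simpa using hcu
    obtain ⟨ss, hsslen, hsmall, happ⟩ := stage_decomp ν q s hc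
    obtain ⟨L, π₁, hL, hrun⟩ := list_sim (fun t => t.pairs.card ≤ ν)
      (fun t ht π₀' => group_sim hG a b habadj habinj t ht π₀') ss hsmall π₀
    refine ⟨L, π₁, by rw [hL, hsslen], fun f => ?_⟩
    rw [hrun f, happ f]
  -- outer simulation
  obtain ⟨π, LK, hLKlen, hsort⟩ := hD
  obtain ⟨L', π₁, hL'len, hrun⟩ := list_sim (fun _ => True) hstage LK (fun _ _ => trivial) 1
  have hid : ∀ f : V → ℕ, f ∘ ⇑(1 : Equiv.Perm V).symm = f := fun f => rfl
  have hsort' : IsSortingNetwork G (π₁.symm.trans π) L' := by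
    intro f hf u w hlt
    have h1 := hrun f
    rw [hid] at h1
    have h2 := hsort f hf (π₁.symm u) (π₁.symm w) hlt
    rw [h1]
    exact h2
  have hmem : D * q * (rt G + 1) ∈ {t | ∃ π' : V ≃ Fin (Fintype.card V),
      ∃ L : List (Stage G), L.length = t ∧ IsSortingNetwork G π' L} := by
    refine ⟨π₁.symm.trans π, L', ?_, hsort'⟩
    rw [hL'len, hLKlen, Nat.mul_assoc]
  exact Nat.sInf_le hmem
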